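/- Let G be a locally compact Hausdorff topological group and Γ a discrete cocompact subgroup of G (the quotient space Γ\G by the left multiplication action is compact). For f : G → ℂ continuous with compact support define Φ(f)(g) = ∑_{γ∈Γ} f(g⁻¹ γ). Then Φ is surjective onto continuous functions on the quotient: for every continuous left Γ-invariant function φ : G → ℂ, there exists f : G → ℂ continuous with compact support such that Φ(f)(g) = φ(g) for all g ∈ G. -/

import Mathlib

open Set Function Pointwise

section Aux

variable {G : Type*} [Group G] [TopologicalSpace G] [IsTopologicalGroup G]
  [LocallyCompactSpace G] [T2Space G] (Γ : Subgroup G) [DiscreteTopology Γ]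

/-- Finitely many elements of a discrete subgroup lie in a compact set. -/
theorem phi_aux_finite {S : Set G} (hS : IsCompact S) :
    {γ : Γ | (γ : G) ∈ S}.Finite := by
  have hcl : IsClosed (Γ : Set G) := Subgroup.isClosed_of_discrete
  have hemb : Topology.IsClosedEmbedding ((↑) : Γ → G) :=
    ⟨Topology.IsEmbedding.subtypeVal, by simpa [Subtype.range_coe] using hcl⟩
  have hcomp : IsCompact (((↑) : Γ → G) ⁻¹' S) := hemb.isCompact_preimage hS
  have : DiscreteTopology (((↑) : Γ → G) ⁻¹' S) := by infer_instance
  exact hcomp.finite (isDiscrete_iff_discreteTopology.mpr this)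

/-- From cocompactness: a compact set `K` such that every `x` has a translate `x * γ ∈ K`. -/
theorem phi_aux_cover (hcocompact : CompactSpace (Quotient (QuotientGroup.rightRel Γ))) :
    ∃ K : Set G, IsCompact K ∧ ∀ x : G, ∃ γ : Γ, x * γ ∈ K := by
  classical
  let q : G → Quotient (QuotientGroup.rightRel Γ) := Quotient.mk _
  -- choose compact neighborhoods
  have hC : ∀ g : G, ∃ C : Set G, IsCompact C ∧ C ∈ nhds g := fun g =>
    exists_compact_mem_nhds g
  choose C hCc hCn using hC
  -- images of interiors are open and cover the quotient
  have hopen : ∀ g : G, IsOpen (q '' interior (C g)) := by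
    intro g
    rw [isOpen_coinduced (f := q)]
    have : q ⁻¹' (q '' interior (C g)) = ⋃ γ : Γ, (γ : G) • interior (C g) := by
      ext x
      simp only [mem_preimage, mem_image, mem_iUnion]
      constructor
      · rintro ⟨y, hy, hqy⟩
        have : QuotientGroup.rightRel Γ y x := Quotient.exact hqy
        rw [QuotientGroup.rightRel_apply] at this
        exact ⟨⟨x * y⁻¹, this⟩, by simpa [Set.mem_smul_set_iff_inv_smul_mem] using hy⟩
      · rintro ⟨γ, hγ⟩
        rw [Set.mem_smul_set_iff_inv_smul_mem] at hγ
        refine ⟨(γ : G)⁻¹ * x, hγ, Quotient.sound ?_⟩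
        refine QuotientGroup.rightRel_apply.mpr ?_
        rw [mul_inv_rev, inv_inv, ← mul_assoc, mul_inv_cancel, one_mul]
        exact γ.2
    rw [this]
    exact isOpen_iUnion fun γ => (isOpen_interior).smul _
  have hcov : univ ⊆ ⋃ g : G, q '' interior (C g) := by
    intro b _
    obtain ⟨x, rfl⟩ := Quotient.exists_rep b
    exact mem_iUnion.2 ⟨x, ⟨x, mem_interior_iff_mem_nhds.2 (hCn x), rfl⟩⟩
  obtain ⟨t, ht⟩ := isCompact_univ.elim_finite_subcover _ hopen hcov
  refine ⟨(⋃ g ∈ t, C g)⁻¹, (t.isCompact_biUnion fun g _ => hCc g).inv, fun x => ?_⟩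
  have := ht (mem_univ (q x⁻¹))
  simp only [Finset.mem_coe, mem_iUnion] at this
  obtain ⟨g, hg, y, hy, hqy⟩ := this
  have hrel : QuotientGroup.rightRel Γ y x⁻¹ := Quotient.exact hqy
  rw [QuotientGroup.rightRel_apply] at hrel
  refine ⟨⟨x⁻¹ * y⁻¹, by simpa using hrel⟩, ?_⟩
  simp only [Subgroup.coe_mk, Set.mem_inv]
  have : x * (x⁻¹ * y⁻¹) = y⁻¹ := by group
  rw [this]
  simpa using Set.mem_biUnion hg (interior_subset hy)

end Aux

/-- Surjectivity of `Φ` onto continuous functions on the quotient: if `Γ` is a discrete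
cocompact subgroup of a locally compact Hausdorff group `G`, then every continuous left
`Γ`-invariant function `φ : G → ℂ` is of the form `Φ(f)(g) = ∑_{γ∈Γ} f(g⁻¹γ)` for some
continuous compactly supported `f : G → ℂ`. -/
theorem Phi_surjective {G : Type*} [Group G] [TopologicalSpace G]
    [IsTopologicalGroup G] [LocallyCompactSpace G] [T2Space G]
    (Γ : Subgroup G) [DiscreteTopology Γ]
    (hcocompact : CompactSpace (Quotient (QuotientGroup.rightRel Γ)))
    (φ : G → ℂ) (hφ : Continuous φ) (hφinv : ∀ (γ : Γ) (g : G), φ (γ * g) = φ g) :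
    ∃ f : G → ℂ, Continuous f ∧ HasCompactSupport f ∧
      ∀ g : G, ∑ᶠ γ : Γ, f (g⁻¹ * γ) = φ g := by
  classical
  obtain ⟨K, hKc, hKcov⟩ := phi_aux_cover Γ hcocompact
  obtain ⟨h, h1, -, hhc, hmem⟩ :=
    exists_continuous_one_zero_of_isCompact hKc isClosed_empty (disjoint_empty K)
  have hnonneg : ∀ x, (0:ℝ) ≤ h x := fun x => (hmem x).1
  set H : G → ℝ := fun x => ∑ᶠ γ : Γ, h (x * γ) with hH
  -- finite support of each sum
  have hfin : ∀ x : G, (support fun γ : Γ => h (x * γ)).Finite := by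
    intro x
    refine (phi_aux_finite Γ (hhc.smul x⁻¹ : IsCompact (x⁻¹ • tsupport h))).subset ?_
    intro γ hγ
    have hx : x * γ ∈ tsupport h := subset_tsupport _ hγ
    exact Set.mem_smul_set_iff_inv_smul_mem.2 (by simpa [smul_eq_mul] using hx)
  -- H is continuous
  have hHcont : Continuous H := by
    apply continuous_finsum (f := fun (γ : Γ) (x : G) => h (x * (γ : G)))
      (fun γ => h.continuous.comp (continuous_mul_right (γ : G)))
    intro x
    obtain ⟨Cx, hCxc, hCxn⟩ := exists_compact_mem_nhds x
    refine ⟨Cx, hCxn, ?_⟩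
    refine (phi_aux_finite Γ (hCxc.inv.mul hhc : IsCompact (Cx⁻¹ * tsupport h))).subset ?_
    rintro γ ⟨z, hz, hzC⟩
    have hzt : z * γ ∈ tsupport h := subset_tsupport _ hz
    exact ⟨z⁻¹, Set.inv_mem_inv.2 hzC, z * γ, hzt, by group⟩
  -- H is at least one everywhere
  have hHpos : ∀ x : G, (1:ℝ) ≤ H x := by
    intro x
    obtain ⟨γ, hγ⟩ := hKcov x
    calc (1:ℝ) = h (x * γ) := (h1 hγ).symm
    _ ≤ H x := single_le_finsum γ (hfin x) fun j => hnonneg _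
  have hHne : ∀ x : G, H x ≠ 0 := fun x => by linarith [hHpos x]
  -- H is right Γ-invariant
  have hHinv : ∀ (x : G) (γ₀ : Γ), H (x * γ₀) = H x := by
    intro x γ₀
    apply finsum_eq_of_bijective (fun γ : Γ => γ₀ * γ) (Equiv.mulLeft γ₀).bijective
    intro γ
    simp [mul_assoc]
  -- the candidate function
  set f : G → ℂ := fun x => (h x / H x) • φ x⁻¹ with hf
  refine ⟨f, ?_, ?_, ?_⟩
  · exact Continuous.smul (h.continuous.div hHcont hHne) (hφ.comp continuous_inv)
  · apply HasCompactSupport.intro hhc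
    intro x hx
    have h0 : h x = 0 := image_eq_zero_of_notMem_tsupport hx
    simp only [hf, h0, zero_div, zero_smul]
  · intro g
    have key : ∀ γ : Γ, f (g⁻¹ * γ) = h (g⁻¹ * γ) • ((H g⁻¹)⁻¹ • φ g) := by
      intro γ
      have h1' : φ ((g⁻¹ * γ)⁻¹) = φ g := by
        rw [mul_inv_rev, inv_inv]
        exact hφinv γ⁻¹ g
      have h2' : H (g⁻¹ * γ) = H g⁻¹ := hHinv g⁻¹ γ
      simp only [hf]
      rw [h1', h2', smul_smul, div_eq_mul_inv]
    calc ∑ᶠ γ : Γ, f (g⁻¹ * γ) = ∑ᶠ γ : Γ, h (g⁻¹ * γ) • ((H g⁻¹)⁻¹ • φ g) := by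
          exact finsum_congr key
    _ = (∑ᶠ γ : Γ, h (g⁻¹ * γ)) • ((H g⁻¹)⁻¹ • φ g) := (finsum_smul' (hfin g⁻¹) _).symm
    _ = φ g := by
          have hHg : ∑ᶠ γ : Γ, h (g⁻¹ * (γ : G)) = H g⁻¹ := rfl
          rw [hHg, smul_smul, mul_inv_cancel₀ (hHne g⁻¹), one_smul]
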